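/- Let X : M → ℝ³ be a spacelike immersion with isolated singularities that is complete (every divergent path in M has infinite length for the induced metric). Then for any spacelike plane Π with orthogonal projection π, and any piecewise smooth curve β : [0,1] → Π of finite length, every inextensible lift α : [0,ε) → M of β under π∘X with ε < 1 has finite length; hence α is not divergent and π∘X has the path-lifting property. Consequently complete spacelike immersions with isolated singularities are entire multigraphs. -/

import Mathlib

/-- Minkowski quadratic form on ℝ³. -/
noncomputable def QL (p : ℝ × ℝ × ℝ) : ℝ := p.1 ^ 2 + p.2.1 ^ 2 - p.2.2 ^ 2

/-- Minkowski bilinear form on ℝ³. -/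
noncomputable def BL (p q : ℝ × ℝ × ℝ) : ℝ :=
  p.1 * q.1 + p.2.1 * q.2.1 - p.2.2 * q.2.2

/-- Lorentzian orthogonal projection onto the plane through 0 orthogonal to `v`. -/
noncomputable def projL (v z : ℝ × ℝ × ℝ) : ℝ × ℝ × ℝ := z - (BL z v / QL v) • v

/-- A path `α : [0,ε) → M` is divergent if it eventually leaves every compact set. -/
def Diverges (α : ℝ → ℝ × ℝ) (ε : ℝ) : Prop :=
  ∀ K : Set (ℝ × ℝ), IsCompact K →
    ∃ t₀ ∈ Set.Ico (0:ℝ) ε, ∀ t ∈ Set.Ioo t₀ ε, α t ∉ K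

/-- The set of partial lengths (for the metric induced by `X`) of the path `α` on `[0,ε)`. -/
noncomputable def PartialLengths (X : ℝ × ℝ → ℝ × ℝ × ℝ) (α : ℝ → ℝ × ℝ) (ε : ℝ) : Set ℝ :=
  {L | ∃ b ∈ Set.Ico (0:ℝ) ε,
        L = ∫ t in (0:ℝ)..b, Real.sqrt (QL (deriv (fun s => X (α s)) t))}

lemma QL_sub_smul (v w : ℝ × ℝ × ℝ) (c : ℝ) :
    QL (w - c • v) = QL w - 2*c*BL w v + c^2 * QL v := by
  simp only [QL, BL, Prod.fst_sub, Prod.snd_sub, Prod.smul_fst, Prod.smul_snd, smul_eq_mul]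
  ring

lemma QL_le_projL (v w : ℝ × ℝ × ℝ) (hv : QL v < 0) : QL w ≤ QL (projL v w) := by
  have hv0 : QL v ≠ 0 := ne_of_lt hv
  have h : QL (projL v w) = QL w - (BL w v)^2 / QL v := by
    rw [projL, QL_sub_smul]; field_simp; ring
  rw [h]
  have : (BL w v)^2 / QL v ≤ 0 :=
    div_nonpos_of_nonneg_of_nonpos (sq_nonneg _) hv.le
  linarith

lemma QL_le_norm (p : ℝ × ℝ × ℝ) : QL p ≤ 2 * ‖p‖^2 := by
  have h1 : |p.1| ≤ ‖p‖ := norm_fst_le p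
  have h2 : |p.2.1| ≤ ‖p‖ := le_trans (norm_fst_le p.2) (norm_snd_le p)
  have h1' : p.1^2 ≤ ‖p‖^2 := by
    rw [← sq_abs]; exact pow_le_pow_left₀ (abs_nonneg _) h1 2
  have h2' : p.2.1^2 ≤ ‖p‖^2 := by
    rw [← sq_abs]; exact pow_le_pow_left₀ (abs_nonneg _) h2 2
  have := sq_nonneg p.2.2
  simp only [QL]; linarith

/-- a complete spacelike immersion (with isolated singularities,
where the induced metric is only ≥ 0) is an entire multigraph: for any spacelike
plane (orthogonal to a timelike `v`) and any finite-length curve `β` in it, every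
lift `α : [0,ε) → M`, `ε < 1`, of `β` under the projection has finite length and
is not divergent, giving the path-lifting property. -/
theorem complete_spacelike_immersion_lifts_have_finite_length
    (X : ℝ × ℝ → ℝ × ℝ × ℝ) (hX : Differentiable ℝ X)
    (hspace : ∀ (p : ℝ × ℝ) (u : ℝ × ℝ), 0 ≤ QL (fderiv ℝ X p u))
    (hcomplete : ∀ (α : ℝ → ℝ × ℝ) (ε : ℝ), 0 < ε →
      ContinuousOn α (Set.Ico 0 ε) →
      (∀ t ∈ Set.Ico (0:ℝ) ε, DifferentiableAt ℝ α t) →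
      Diverges α ε → ¬ BddAbove (PartialLengths X α ε))
    (v : ℝ × ℝ × ℝ) (hv : QL v < 0)
    (β : ℝ → ℝ × ℝ × ℝ) (hβd : Differentiable ℝ β)
    (hβplane : ∀ t : ℝ, BL (β t) v = 0)
    (C : ℝ) (hβlen : ∀ t : ℝ, ‖deriv β t‖ ≤ C)
    (ε : ℝ) (hε0 : 0 < ε) (hε1 : ε < 1)
    (α : ℝ → ℝ × ℝ) (hαc : ContinuousOn α (Set.Ico 0 ε))
    (hαd : ∀ t ∈ Set.Ico (0:ℝ) ε, DifferentiableAt ℝ α t)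
    (hlift : ∀ t ∈ Set.Ico (0:ℝ) ε, projL v (X (α t)) = β t) :
    BddAbove (PartialLengths X α ε) ∧ ¬ Diverges α ε := by
  have hC0 : 0 ≤ C := le_trans (norm_nonneg _) (hβlen 0)
  have hM0 : 0 ≤ Real.sqrt 2 * C := mul_nonneg (Real.sqrt_nonneg _) hC0
  have hbdd : BddAbove (PartialLengths X α ε) := by
    refine ⟨Real.sqrt 2 * C, ?_⟩
    rintro L ⟨b, hb, rfl⟩
    -- pointwise bound on the integrand
    have hpt : ∀ t ∈ Set.uIoc (0:ℝ) b,
        ‖Real.sqrt (QL (deriv (fun s => X (α s)) t))‖ ≤ Real.sqrt 2 * C := by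
      rw [Set.uIoc_of_le hb.1]
      intro t ht
      have htε : t ∈ Set.Ioo (0:ℝ) ε := ⟨ht.1, lt_of_le_of_lt ht.2 hb.2⟩
      have htI : t ∈ Set.Ico (0:ℝ) ε := ⟨htε.1.le, htε.2⟩
      have hgd : HasDerivAt (fun s => X (α s)) (fderiv ℝ X (α t) (deriv α t)) t :=
        (hX (α t)).hasFDerivAt.comp_hasDerivAt t (hαd t htI).hasDerivAt
      set w := fderiv ℝ X (α t) (deriv α t) with hw
      have hQw : 0 ≤ QL w := hspace _ _
      -- derivative of the projected curve
      have h1 : HasDerivAt (fun s => (X (α s)).1) w.1 t := hgd.fst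
      have h2 : HasDerivAt (fun s => (X (α s)).2.1) w.2.1 t := hgd.snd.fst
      have h3 : HasDerivAt (fun s => (X (α s)).2.2) w.2.2 t := hgd.snd.snd
      have hc : HasDerivAt (fun s => BL (X (α s)) v) (BL w v) t := by
        simpa [BL, Pi.add_def, Pi.sub_def] using ((h1.mul_const v.1).add (h2.mul_const v.2.1)).sub
          (h3.mul_const v.2.2)
      have hproj : HasDerivAt (fun s => projL v (X (α s))) (projL v w) t := by
        simpa [projL, Pi.sub_def] using hgd.sub ((hc.div_const (QL v)).smul_const v)
      have hββ : β =ᶠ[nhds t] fun s => projL v (X (α s)) := by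
        filter_upwards [Ioo_mem_nhds htε.1 htε.2] with s hs
        exact (hlift s ⟨hs.1.le, hs.2⟩).symm
      have hβder : HasDerivAt β (projL v w) t := hproj.congr_of_eventuallyEq hββ
      have hq : QL (projL v w) ≤ 2 * C^2 := by
        have := QL_le_norm (projL v w)
        have hn : ‖projL v w‖ ≤ C := by rw [← hβder.deriv]; exact hβlen t
        nlinarith [norm_nonneg (projL v w)]
      have hQw2 : QL w ≤ 2 * C^2 := le_trans (QL_le_projL v w hv) hq
      have hsq : Real.sqrt (QL w) ≤ Real.sqrt (2 * C^2) := Real.sqrt_le_sqrt hQw2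
      have : Real.sqrt (2 * C^2) = Real.sqrt 2 * C := by
        rw [Real.sqrt_mul (by norm_num), Real.sqrt_sq hC0]
      rw [hgd.deriv, Real.norm_eq_abs, abs_of_nonneg (Real.sqrt_nonneg _)]
      rw [← this]; exact hsq
    have hint := intervalIntegral.norm_integral_le_of_norm_le_const hpt
    have hb1 : |b - 0| ≤ 1 := by
      rw [abs_of_nonneg (by linarith [hb.1])]
      linarith [hb.2, hε1]
    calc (∫ t in (0:ℝ)..b, Real.sqrt (QL (deriv (fun s => X (α s)) t)))
        ≤ ‖∫ t in (0:ℝ)..b, Real.sqrt (QL (deriv (fun s => X (α s)) t))‖ :=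
          le_abs_self _
      _ ≤ Real.sqrt 2 * C * |b - 0| := hint
      _ ≤ Real.sqrt 2 * C := mul_le_of_le_one_right hM0 hb1
  exact ⟨hbdd, fun hdiv => hcomplete α ε hε0 hαc hαd hdiv hbdd⟩
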